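/- Let n ≥ 1 and let a : {1,…,n} → ℤ be a downhill weighing (a(1) > a(2) > … > a(n)) that is a balance: Σ_{i=1}^n i·a(i) = 0. Then the weighing is verifying: for every permutation σ of {1,…,n} with σ ≠ id, Σ_{i=1}^n i·a(σ(i)) ≠ 0 (in fact Σ_{i=1}^n i·a(σ(i)) > 0). -/

import Mathlib

/-- A downhill balance is verifying: any nonidentity rearrangement makes the
balance sum strictly positive (in particular nonzero). -/
theorem downhill_balance_verifying (n : ℕ) (hn : 1 ≤ n) (a : Fin n → ℤ)
    (hdown : ∀ i j : Fin n, i < j → a j < a i)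
    (hbal : ∑ i : Fin n, ((i : ℤ) + 1) * a i = 0) :
    ∀ σ : Equiv.Perm (Fin n), σ ≠ 1 →
      0 < ∑ i : Fin n, ((i : ℤ) + 1) * a (σ i) := by
  intro σ hσ
  set f : Fin n → ℤ := fun i => (i : ℤ) + 1 with hf
  have ha : StrictAnti a := fun i j h => hdown i j h
  have hfg : Antivary f a := by
    intro i j h
    have hji : j < i := (ha.lt_iff_gt).1 h
    have : (j : ℤ) < (i : ℤ) := by exact_mod_cast hji
    simp only [hf]
    linarith
  have hnot : ¬ Antivary f (a ∘ σ) := by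
    intro hA
    apply hσ
    have hmono : StrictMono (σ : Fin n → Fin n) := by
      intro i j hij
      rcases lt_trichotomy (σ i) (σ j) with h | h | h
      · exact h
      · exact absurd (σ.injective h) (ne_of_lt hij)
      · have h2 : (a ∘ σ) i < (a ∘ σ) j := ha h
        have := hA h2
        simp only [hf] at this
        have hle : (j : ℤ) ≤ (i : ℤ) := by linarith
        exact absurd hij (not_lt.2 (by exact_mod_cast hle))
    have hid : (σ : Fin n → Fin n) = id := by
      apply (StrictMono.range_inj hmono strictMono_id).1
      simp [Set.range_eq_univ.2 σ.surjective]
    exact Equiv.ext fun i => congrFun hid i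
  have hlt : ∑ i : Fin n, f i • a i < ∑ i : Fin n, f i • a (σ i) :=
    (Antivary.sum_smul_lt_sum_smul_comp_perm_iff hfg).2 hnot
  simp only [smul_eq_mul, hf] at hlt
  calc (0 : ℤ) = ∑ i : Fin n, ((i : ℤ) + 1) * a i := hbal.symm
    _ < _ := hlt
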